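/- Let X be a Banach lattice and X_a its order continuous part (the set of f ∈ X such that ‖f_α‖ → 0 whenever f_α →o 0 with |f_α| ≤ |f|). If (f_n) is a sequence in X_a that converges to 0 in the topology σ(X, X_n^~), then (f_n) converges weakly to 0 in X. -/

import Mathlib

open Filter Topology Pointwise

noncomputable section

/-- A directed index type for nets. -/
structure DirectedType : Type 1 where
  ι : Type
  r : ι → ι → Prop
  nonempty : Nonempty ι
  refl : ∀ a, r a a
  trans : ∀ a b c, r a b → r b c → r a c
  directed : ∀ a b, ∃ c, r a c ∧ r b c

/-- The natural numbers as a directed type (for sequences). -/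
def natDir : DirectedType where
  ι := ℕ
  r := (· ≤ ·)
  nonempty := ⟨0⟩
  refl := fun _ => le_refl _
  trans := fun _ _ _ => le_trans
  directed := fun a b => ⟨max a b, le_max_left _ _, le_max_right _ _⟩

/-- A real valued net tends to zero. -/
def NetTendstoZero (D : DirectedType) (u : D.ι → ℝ) : Prop :=
  ∀ ε : ℝ, 0 < ε → ∃ i₀, ∀ i, D.r i₀ i → |u i| < ε

variable {X : Type*} [NormedAddCommGroup X] [Lattice X] [HasSolidNorm X] [IsOrderedAddMonoid X] [NormedSpace ℝ X]

/-- Order convergence of a net: there is a decreasing net `h` with infimum `0`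
dominating `|f i - x|` eventually. -/
def OrderConvNet (D : DirectedType) (f : D.ι → X) (x : X) : Prop :=
  ∃ (E : DirectedType) (h : E.ι → X),
    (∀ γ₁ γ₂, E.r γ₁ γ₂ → h γ₂ ≤ h γ₁) ∧ IsGLB (Set.range h) 0 ∧
      ∀ γ, ∃ i₀, ∀ i, D.r i₀ i → |f i - x| ≤ h γ

/-- The order closure of a set: all limits of order convergent nets from the set. -/
def OrderClosure (C : Set X) : Set X :=
  {x | ∃ (D : DirectedType) (f : D.ι → X), (∀ i, f i ∈ C) ∧ OrderConvNet D f x}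

/-- A set is order closed if it contains all order limits of nets from it. -/
def IsOrderClosed (C : Set X) : Prop := OrderClosure C ⊆ C

/-- Unbounded order convergence of a net. -/
def UOConvNet (D : DirectedType) (f : D.ι → X) (x : X) : Prop :=
  ∀ h : X, 0 ≤ h → OrderConvNet D (fun i => |f i - x| ⊓ h) 0

/-- Membership in the order continuous dual `X_n^~`. -/
def InOCDual (g : X →L[ℝ] ℝ) : Prop :=
  ∀ (D : DirectedType) (f : D.ι → X), OrderConvNet D f 0 →
    NetTendstoZero D fun i => g (f i)

/-- Membership in the unbounded order continuous dual `X_uo^~`. -/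
def InUODual (g : X →L[ℝ] ℝ) : Prop :=
  ∀ (D : DirectedType) (f : D.ι → X), (∃ M, ∀ i, ‖f i‖ ≤ M) → UOConvNet D f 0 →
    NetTendstoZero D fun i => g (f i)

/-- Convergence of a net in the topology `σ(X, X_n^~)`. -/
def SigmaNConvNet (D : DirectedType) (f : D.ι → X) (x : X) : Prop :=
  ∀ g : X →L[ℝ] ℝ, InOCDual g → NetTendstoZero D fun i => g (f i) - g x

/-- Convergence of a net in the topology `σ(X, X_uo^~)`. -/
def SigmaUOConvNet (D : DirectedType) (f : D.ι → X) (x : X) : Prop :=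
  ∀ g : X →L[ℝ] ℝ, InUODual g → NetTendstoZero D fun i => g (f i) - g x

/-- A set is `σ(X, X_n^~)`-closed. -/
def IsSigmaNClosed (C : Set X) : Prop :=
  ∀ (D : DirectedType) (f : D.ι → X), (∀ i, f i ∈ C) →
    ∀ x, SigmaNConvNet D f x → x ∈ C

/-- A set is `σ(X, X_uo^~)`-closed. -/
def IsSigmaUOClosed (C : Set X) : Prop :=
  ∀ (D : DirectedType) (f : D.ι → X), (∀ i, f i ∈ C) →
    ∀ x, SigmaUOConvNet D f x → x ∈ C

/-- The `σ(X, X_n^~)`-closure of a set. -/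
def SigmaNClosure (C : Set X) : Set X :=
  {x | ∃ (D : DirectedType) (f : D.ι → X), (∀ i, f i ∈ C) ∧ SigmaNConvNet D f x}

/-- The `|σ|(X, X_n^~)`-sequential closure of a set. -/
def AbsSigmaSeqClosure (C : Set X) : Set X :=
  {x | ∃ s : ℕ → X, (∀ n, s n ∈ C) ∧
    ∀ g : X →L[ℝ] ℝ, InOCDual g → Tendsto (fun n => g (|s n - x|)) atTop (𝓝 0)}

/-- A set is `|σ|(X, X_n^~)`-sequentially closed. -/
def IsAbsSigmaSeqClosed (C : Set X) : Prop := AbsSigmaSeqClosure C ⊆ C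

/-- The order on the dual: `g ≤ h` iff `g x ≤ h x` on the positive cone. -/
def dualLE (g h : X →L[ℝ] ℝ) : Prop := ∀ x : X, 0 ≤ x → g x ≤ h x

/-- Order continuity of the norm on a subset `S` of the dual: every net in `S`
decreasing to `0` (infimum `0` among lower bounds from `S`) converges to `0` in
the operator norm. -/
def DualOCOn (S : Set (X →L[ℝ] ℝ)) : Prop :=
  ∀ (D : DirectedType) (f : D.ι → (X →L[ℝ] ℝ)), (∀ i, f i ∈ S) →
    (∀ i j, D.r i j → dualLE (f j) (f i)) → (∀ i, dualLE 0 (f i)) →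
    (∀ h ∈ S, (∀ i, dualLE h (f i)) → dualLE h 0) →
    NetTendstoZero D fun i => ‖f i‖

/-- A sequence is weakly null. -/
def WeaklyNull (f : ℕ → X) : Prop :=
  ∀ g : X →L[ℝ] ℝ, Tendsto (fun n => g (f n)) atTop (𝓝 0)

/-- The sequence satisfies a lower `ℓ¹`-estimate, i.e. it is equivalent to the
unit vector basis of `ℓ¹`. -/
def IsL1Basic (f : ℕ → X) : Prop :=
  ∃ M : ℝ, 0 < M ∧ ∀ (m : ℕ) (a : ℕ → ℝ),
    (1 / M) * ∑ k ∈ Finset.range m, |a k| ≤ ‖∑ k ∈ Finset.range m, a k • f k‖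

variable (X)

/-- Order continuity of the norm of `X`. -/
def OCNorm : Prop :=
  ∀ (D : DirectedType) (f : D.ι → X), (∀ i j, D.r i j → f j ≤ f i) →
    IsGLB (Set.range f) 0 → NetTendstoZero D fun i => ‖f i‖

/-- The order continuous dual as a set of continuous linear functionals. -/
def OCDual : Set (X →L[ℝ] ℝ) := {g | InOCDual g}

/-- The norm dual `X*` is order continuous. -/
def DualOrderContinuous : Prop := DualOCOn (Set.univ : Set (X →L[ℝ] ℝ))

/-- The order continuous dual `X_n^~` is order continuous. -/
def OCDualOrderContinuous : Prop := DualOCOn (OCDual X)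

/-- `X` is monotonically complete. -/
def MonotonicallyComplete : Prop :=
  ∀ (D : DirectedType) (f : D.ι → X), (∀ i j, D.r i j → f i ≤ f j) →
    (∃ M, ∀ i, ‖f i‖ ≤ M) → ∃ s, IsLUB (Set.range f) s

/-- `X` is Dedekind complete. -/
def DedekindComplete : Prop :=
  ∀ S : Set X, S.Nonempty → BddAbove S → ∃ s, IsLUB S s

/-- `X` is σ-Dedekind complete. -/
def SigmaDedekindComplete : Prop :=
  ∀ f : ℕ → X, BddAbove (Set.range f) → ∃ s, IsLUB (Set.range f) s

/-- `X` has the weak Fatou property. -/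
def WeakFatou : Prop :=
  ∃ r : ℝ, 0 < r ∧ ∀ (D : DirectedType) (f : D.ι → X),
    (∀ i j, D.r i j → f i ≤ f j) → ∀ s, IsLUB (Set.range f) s →
    ∀ M : ℝ, (∀ i, ‖f i‖ ≤ M) → ‖s‖ ≤ r * M

/-- `X_n^~` separates the points of `X`. -/
def OCDualSeparatesPoints : Prop :=
  ∀ x : X, x ≠ 0 → ∃ g : X →L[ℝ] ℝ, InOCDual g ∧ g x ≠ 0

/-- `X_n^~` contains a strictly positive element. -/
def HasStrictlyPositiveOCFunctional : Prop :=
  ∃ g : X →L[ℝ] ℝ, InOCDual g ∧ ∀ x : X, x ≠ 0 → 0 < g (|x|)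

/-- The unit ball `B` determined by `X_n^~`. -/
def KSBall : Set X :=
  {x | ∀ g : X →L[ℝ] ℝ, InOCDual g → dualLE 0 g → ‖g‖ ≤ 1 → g (|x|) ≤ 1}

/-- `σ(X, X_n^~)` has the Krein–Smulian property. -/
def KreinSmulianProperty : Prop :=
  ∀ C : Set X, Convex ℝ C →
    (∀ k : ℕ, IsSigmaNClosed (C ∩ (k : ℝ) • KSBall X)) → IsSigmaNClosed C

/-- Property `P1`: every order closed convex set is `σ(X, X_n^~)`-closed. -/
def PropP1 : Prop := ∀ C : Set X, Convex ℝ C → IsOrderClosed C → IsSigmaNClosed C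

/-- Property `P4`: every norm bounded order closed convex set is
`|σ|(X, X_n^~)`-sequentially closed. -/
def PropP4 : Prop :=
  ∀ C : Set X, Convex ℝ C → (∃ M, ∀ x ∈ C, ‖x‖ ≤ M) → IsOrderClosed C →
    IsAbsSigmaSeqClosed C

/-- The disjoint order continuity property. -/
def DOCP : Prop :=
  ∀ f : ℕ → X, (∀ n, 0 ≤ f n) → (∃ M, ∀ n, ‖f n‖ ≤ M) →
    (∀ n m, n ≠ m → f n ⊓ f m = 0) →
    (∀ g : X →L[ℝ] ℝ, InOCDual g → Tendsto (fun n => g (f n)) atTop (𝓝 0)) →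
    WeaklyNull f

/-- The order continuous part `X_a` of `X`. -/
def OrderContPart : Set X :=
  {f | ∀ (D : DirectedType) (g : D.ι → X), (∀ i, |g i| ≤ |f|) →
    OrderConvNet D g 0 → NetTendstoZero D fun i => ‖g i‖}

/-- The order subsequence splitting property. -/
def OSSP : Prop :=
  ∀ f : ℕ → X, (∀ n, 0 ≤ f n) → (∃ M, ∀ n, ‖f n‖ ≤ M) → UOConvNet natDir f 0 →
    ∃ φ : ℕ → ℕ, StrictMono φ ∧ ∃ x y z : ℕ → X,
      (∀ k, f (φ k) = x k + y k + z k) ∧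
      (∀ k, 0 ≤ x k) ∧ (∀ k, 0 ≤ y k) ∧ (∀ k, 0 ≤ z k) ∧
      (∀ k, x k ∈ OrderContPart X) ∧
      (∀ k l, k ≠ l → y k ⊓ y l = 0) ∧
      (∃ b, ∀ k, z k ≤ b)

variable {X}
section Stmt8Aux

variable {Y : Type*} [NormedAddCommGroup Y] [Lattice Y] [HasSolidNorm Y] [IsOrderedAddMonoid Y]

lemma ocp_zero : (0 : Y) ∈ OrderContPart Y := by
  intro D g hg _ ε hε
  obtain ⟨i₀⟩ := D.nonempty
  refine ⟨i₀, fun i _ => ?_⟩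
  have h1 : ‖g i‖ ≤ ‖(0 : Y)‖ := HasSolidNorm.solid (by simpa using hg i)
  rw [norm_zero] at h1
  rw [abs_of_nonneg (norm_nonneg _)]
  exact lt_of_le_of_lt h1 hε

lemma ocp_mono {a b : Y} (ha : a ∈ OrderContPart Y) (hba : |b| ≤ |a|) :
    b ∈ OrderContPart Y := fun D g hg hconv => ha D g (fun i => (hg i).trans hba) hconv

lemma orderConv_of_le {D : DirectedType} {u v : D.ι → Y}
    (h : ∀ i, |u i| ≤ |v i|) (hv : OrderConvNet D v 0) : OrderConvNet D u 0 := by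
  obtain ⟨E, w, hdec, hglb, hdom⟩ := hv
  refine ⟨E, w, hdec, hglb, fun γ => ?_⟩
  obtain ⟨i₀, hi₀⟩ := hdom γ
  refine ⟨i₀, fun i hi => ?_⟩
  have h2 := hi₀ i hi
  rw [sub_zero] at h2 ⊢
  calc |u i| ≤ |v i| := h i
  _ ≤ |(|v i|)| := (abs_abs (v i)).symm.le
  _ ≤ w γ := by rwa [abs_abs]

lemma ocp_add {a b : Y} (ha : a ∈ OrderContPart Y) (hb : b ∈ OrderContPart Y) :
    a + b ∈ OrderContPart Y := by
  intro D u hu hconv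
  set p : D.ι → Y := fun i => |u i| ⊓ |a| with hp
  set q : D.ι → Y := fun i => |u i| - p i with hq
  have hp0 : ∀ i, 0 ≤ p i := fun i => le_inf (abs_nonneg _) (abs_nonneg _)
  have hpu : ∀ i, p i ≤ |u i| := fun i => inf_le_left
  have hpa : ∀ i, |p i| ≤ |a| := fun i => by
    rw [abs_of_nonneg (hp0 i)]; exact inf_le_right
  have hq0 : ∀ i, 0 ≤ q i := fun i => sub_nonneg.2 (hpu i)
  have hqu : ∀ i, q i ≤ |u i| := fun i => sub_le_self _ (hp0 i)
  have hqb : ∀ i, |q i| ≤ |b| := by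
    intro i
    rw [abs_of_nonneg (hq0 i)]
    have h1 : q i = (|u i| - |u i|) ⊔ (|u i| - |a|) := sub_inf _ _ _
    rw [h1, sub_self]
    refine sup_le (abs_nonneg b) (sub_le_iff_le_add'.2 ?_)
    exact (hu i).trans (abs_add_le a b)
  have hconvp : OrderConvNet D p 0 :=
    orderConv_of_le (fun i => (abs_of_nonneg (hp0 i)).trans_le (hpu i)) hconv
  have hconvq : OrderConvNet D q 0 :=
    orderConv_of_le (fun i => (abs_of_nonneg (hq0 i)).trans_le (hqu i)) hconv
  have hnp := ha D p hpa hconvp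
  have hnq := hb D q hqb hconvq
  intro ε hε
  obtain ⟨i₁, h₁⟩ := hnp (ε / 2) (by linarith)
  obtain ⟨i₂, h₂⟩ := hnq (ε / 2) (by linarith)
  obtain ⟨i₀, ha1, ha2⟩ := D.directed i₁ i₂
  refine ⟨i₀, fun i hi => ?_⟩
  have e1 := h₁ i (D.trans _ _ _ ha1 hi)
  have e2 := h₂ i (D.trans _ _ _ ha2 hi)
  rw [abs_of_nonneg (norm_nonneg _)] at e1 e2 ⊢
  have e3 : ‖u i‖ = ‖p i + q i‖ := by
    rw [← norm_abs_eq_norm (u i)]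
    congr 1
    show |u i| = p i + (|u i| - p i)
    abel
  rw [e3]
  calc ‖p i + q i‖ ≤ ‖p i‖ + ‖q i‖ := norm_add_le _ _
  _ < ε := by linarith

/-! ### The sup-formula functional over `X_a` -/

section s8P

variable [NormedSpace ℝ Y]

/-- Admissible set for the sup formula. -/
def s8Set (x : Y) : Set Y := {y | y ∈ OrderContPart Y ∧ 0 ≤ y ∧ y ≤ x}

/-- `P g x = sup { g y : y ∈ X_a, 0 ≤ y ≤ x }`. -/
def s8P (g : Y →L[ℝ] ℝ) (x : Y) : ℝ := sSup ((fun y => g y) '' s8Set x)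

lemma s8Set_zero_mem {x : Y} (hx : 0 ≤ x) : (0 : Y) ∈ s8Set x := ⟨ocp_zero, le_rfl, hx⟩

lemma s8Set_img_nonempty (g : Y →L[ℝ] ℝ) {x : Y} (hx : 0 ≤ x) :
    ((fun y => g y) '' s8Set x).Nonempty :=
  ⟨g 0, Set.mem_image_of_mem _ (s8Set_zero_mem hx)⟩

lemma s8Set_img_bdd (g : Y →L[ℝ] ℝ) {x : Y} (hx : 0 ≤ x) :
    BddAbove ((fun y => g y) '' s8Set x) := by
  refine ⟨‖g‖ * ‖x‖, ?_⟩
  rintro r ⟨y, ⟨hya, hy0, hyx⟩, rfl⟩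
  have h1 : ‖y‖ ≤ ‖x‖ :=
    HasSolidNorm.solid (by rw [abs_of_nonneg hy0, abs_of_nonneg hx]; exact hyx)
  calc g y ≤ |g y| := le_abs_self _
  _ = ‖g y‖ := (Real.norm_eq_abs _).symm
  _ ≤ ‖g‖ * ‖y‖ := g.le_opNorm y
  _ ≤ ‖g‖ * ‖x‖ := mul_le_mul_of_nonneg_left h1 (norm_nonneg g)

lemma le_s8P (g : Y →L[ℝ] ℝ) {x y : Y} (hx : 0 ≤ x) (hy : y ∈ s8Set x) :
    g y ≤ s8P g x :=
  le_csSup (s8Set_img_bdd g hx) (Set.mem_image_of_mem _ hy)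

lemma s8P_nonneg (g : Y →L[ℝ] ℝ) {x : Y} (hx : 0 ≤ x) : 0 ≤ s8P g x := by
  have := le_s8P g hx (s8Set_zero_mem hx)
  rwa [map_zero] at this

lemma s8P_le_norm (g : Y →L[ℝ] ℝ) {x : Y} (hx : 0 ≤ x) : s8P g x ≤ ‖g‖ * ‖x‖ := by
  refine csSup_le (s8Set_img_nonempty g hx) ?_
  rintro r ⟨y, ⟨hya, hy0, hyx⟩, rfl⟩
  have h1 : ‖y‖ ≤ ‖x‖ :=
    HasSolidNorm.solid (by rw [abs_of_nonneg hy0, abs_of_nonneg hx]; exact hyx)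
  calc g y ≤ |g y| := le_abs_self _
  _ = ‖g y‖ := (Real.norm_eq_abs _).symm
  _ ≤ ‖g‖ * ‖y‖ := g.le_opNorm y
  _ ≤ ‖g‖ * ‖x‖ := mul_le_mul_of_nonneg_left h1 (norm_nonneg g)

lemma s8P_mono (g : Y →L[ℝ] ℝ) {x y : Y} (hx : 0 ≤ x) (hxy : x ≤ y) :
    s8P g x ≤ s8P g y := by
  refine csSup_le_csSup (s8Set_img_bdd g (hx.trans hxy)) (s8Set_img_nonempty g hx) ?_
  exact Set.image_mono (fun z ⟨h1, h2, h3⟩ => ⟨h1, h2, h3.trans hxy⟩)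

lemma s8P_add (g : Y →L[ℝ] ℝ) {x y : Y} (hx : 0 ≤ x) (hy : 0 ≤ y) :
    s8P g (x + y) = s8P g x + s8P g y := by
  have hxy : 0 ≤ x + y := add_nonneg hx hy
  apply le_antisymm
  · refine csSup_le (s8Set_img_nonempty g hxy) ?_
    rintro r ⟨z, ⟨hza, hz0, hzle⟩, rfl⟩
    set z₁ : Y := z ⊓ x with hz₁
    set z₂ : Y := z - z₁ with hz₂
    have hz₁0 : 0 ≤ z₁ := le_inf hz0 hx
    have hz₁z : z₁ ≤ z := inf_le_left
    have h1 : z₁ ∈ s8Set x :=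
      ⟨ocp_mono hza (by rw [abs_of_nonneg hz₁0, abs_of_nonneg hz0]; exact hz₁z),
        hz₁0, inf_le_right⟩
    have hz₂0 : 0 ≤ z₂ := sub_nonneg.2 hz₁z
    have hz₂z : z₂ ≤ z := sub_le_self _ hz₁0
    have hz₂y : z₂ ≤ y := by
      have e : z₂ = (z - z) ⊔ (z - x) := sub_inf _ _ _
      rw [e, sub_self]
      refine sup_le hy (sub_le_iff_le_add'.2 ?_)
      exact hzle
    have h2 : z₂ ∈ s8Set y :=
      ⟨ocp_mono hza (by rw [abs_of_nonneg hz₂0, abs_of_nonneg hz0]; exact hz₂z), hz₂0, hz₂y⟩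
    have e2 : g z = g z₁ + g z₂ := by
      rw [← map_add]
      congr 1
      rw [hz₂]; abel
    show g z ≤ _
    rw [e2]
    exact add_le_add (le_s8P g hx h1) (le_s8P g hy h2)
  · have Hb : ∀ a ∈ (fun y' => g y') '' s8Set x, ∀ b ∈ (fun y' => g y') '' s8Set y,
        a + b ≤ s8P g (x + y) := by
      rintro _ ⟨z₁, ⟨h1a, h10, h1le⟩, rfl⟩ _ ⟨z₂, ⟨h2a, h20, h2le⟩, rfl⟩
      have := le_s8P g hxy (x := x + y) (y := z₁ + z₂)
        ⟨ocp_add h1a h2a, add_nonneg h10 h20, add_le_add h1le h2le⟩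
      rwa [map_add] at this
    have h1 : s8P g x ≤ s8P g (x + y) - s8P g y := by
      refine csSup_le (s8Set_img_nonempty g hx) (fun a ha => ?_)
      have h2 : s8P g y ≤ s8P g (x + y) - a := by
        refine csSup_le (s8Set_img_nonempty g hy) (fun b hb => ?_)
        have := Hb a ha b hb
        linarith
      linarith
    linarith

lemma s8P_neg_eq (g : Y →L[ℝ] ℝ) {z : Y} (hz : z ∈ OrderContPart Y) (hz0 : 0 ≤ z) :
    s8P (-g) z = s8P g z - g z := by
  have hmem : ∀ y ∈ s8Set (Y := Y) z, z - y ∈ s8Set z := by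
    rintro y ⟨hya, hy0, hyz⟩
    exact ⟨ocp_mono hz (by
      rw [abs_of_nonneg (sub_nonneg.2 hyz), abs_of_nonneg hz0]
      exact sub_le_self _ hy0), sub_nonneg.2 hyz, sub_le_self _ hy0⟩
  apply le_antisymm
  · refine csSup_le (s8Set_img_nonempty (-g) hz0) ?_
    rintro r ⟨y, hy, rfl⟩
    have h1 : g (z - y) ≤ s8P g z := le_s8P g hz0 (hmem y hy)
    rw [map_sub] at h1
    simp only [ContinuousLinearMap.neg_apply]
    linarith
  · rw [sub_le_iff_le_add]
    refine csSup_le (s8Set_img_nonempty g hz0) ?_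
    rintro r ⟨y, hy, rfl⟩
    have h1 : (-g) (z - y) ≤ s8P (-g) z := le_s8P (-g) hz0 (hmem y hy)
    simp only [ContinuousLinearMap.neg_apply, map_sub] at h1
    linarith

/-! ### The Kantorovich-type extension -/

lemma posPart_le_abs' (x : Y) : x⁺ ≤ |x| := by
  rw [posPart_def]
  exact sup_le (le_abs_self x) (abs_nonneg x)

lemma negPart_le_abs' (x : Y) : x⁻ ≤ |x| := by
  rw [negPart_def]
  exact sup_le (neg_le_abs x) (abs_nonneg x)

/-- `Φ g x = P g x⁺ - P g x⁻`. -/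
def s8Phi (g : Y →L[ℝ] ℝ) (x : Y) : ℝ := s8P g (x⁺) - s8P g (x⁻)

lemma phi_key (x y : Y) : (x + y)⁺ + (x⁻ + y⁻) = (x⁺ + y⁺) + (x + y)⁻ := by
  have h : (x + y)⁺ - (x + y)⁻ = (x⁺ + y⁺) - (x⁻ + y⁻) := by
    rw [posPart_sub_negPart]
    rw [show x⁺ + y⁺ - (x⁻ + y⁻) = (x⁺ - x⁻) + (y⁺ - y⁻) by abel,
      posPart_sub_negPart, posPart_sub_negPart]
  exact sub_eq_sub_iff_add_eq_add.mp h

lemma s8Phi_add (g : Y →L[ℝ] ℝ) (x y : Y) : s8Phi g (x + y) = s8Phi g x + s8Phi g y := by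
  have h2 : s8P g ((x + y)⁺ + (x⁻ + y⁻)) = s8P g ((x⁺ + y⁺) + (x + y)⁻) := by
    rw [phi_key]
  rw [s8P_add g (posPart_nonneg _) (add_nonneg (negPart_nonneg _) (negPart_nonneg _)),
    s8P_add g (add_nonneg (posPart_nonneg _) (posPart_nonneg _)) (negPart_nonneg _),
    s8P_add g (negPart_nonneg _) (negPart_nonneg _),
    s8P_add g (posPart_nonneg _) (posPart_nonneg _)] at h2
  unfold s8Phi
  linarith

lemma abs_s8Phi_le (g : Y →L[ℝ] ℝ) (x : Y) : |s8Phi g x| ≤ s8P g |x| := by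
  have h1 : s8P g (x⁺) ≤ s8P g |x| := s8P_mono g (posPart_nonneg x) (posPart_le_abs' x)
  have h2 : s8P g (x⁻) ≤ s8P g |x| := s8P_mono g (negPart_nonneg x) (negPart_le_abs' x)
  have h3 : 0 ≤ s8P g (x⁺) := s8P_nonneg g (posPart_nonneg x)
  have h4 : 0 ≤ s8P g (x⁻) := s8P_nonneg g (negPart_nonneg x)
  rw [abs_le]
  constructor <;> (unfold s8Phi; linarith)

/-- `Φ g` as an additive monoid homomorphism. -/
def s8PhiHom (g : Y →L[ℝ] ℝ) : Y →+ ℝ := AddMonoidHom.mk' (s8Phi g) (s8Phi_add g)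

lemma s8PhiHom_cont (g : Y →L[ℝ] ℝ) : Continuous (s8PhiHom g) := by
  have hb : ∀ z : Y, |s8Phi g z| ≤ ‖g‖ * ‖z‖ := fun z =>
    (abs_s8Phi_le g z).trans ((s8P_le_norm g (abs_nonneg z)).trans_eq (by rw [norm_abs_eq_norm]))
  have hl : LipschitzWith ‖g‖₊ (s8Phi g) := by
    refine LipschitzWith.of_dist_le_mul (fun a b => ?_)
    have e : s8Phi g a - s8Phi g b = s8Phi g (a - b) := by
      have := s8Phi_add g (a - b) b
      rw [sub_add_cancel] at this
      linarith
    rw [Real.dist_eq, e, dist_eq_norm]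
    calc |s8Phi g (a - b)| ≤ ‖g‖ * ‖a - b‖ := hb _
    _ = (‖g‖₊ : ℝ) * ‖a - b‖ := by rw [coe_nnnorm]
  exact hl.continuous

/-- The extension of `g` which is order continuous and agrees with `g` on `X_a`. -/
def s8H (g : Y →L[ℝ] ℝ) : Y →L[ℝ] ℝ :=
  (s8PhiHom g).toRealLinearMap (s8PhiHom_cont g) -
    (s8PhiHom (-g)).toRealLinearMap (s8PhiHom_cont (-g))

lemma s8H_apply (g : Y →L[ℝ] ℝ) (x : Y) : s8H g x = s8Phi g x - s8Phi (-g) x := by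
  simp only [s8H, ContinuousLinearMap.sub_apply]
  rw [AddMonoidHom.coe_toRealLinearMap, AddMonoidHom.coe_toRealLinearMap]
  rfl

lemma s8H_eq (g : Y →L[ℝ] ℝ) {x : Y} (hx : x ∈ OrderContPart Y) : s8H g x = g x := by
  rw [s8H_apply]
  have hp : x⁺ ∈ OrderContPart Y :=
    ocp_mono hx (by rw [abs_of_nonneg (posPart_nonneg x)]; exact posPart_le_abs' x)
  have hn : x⁻ ∈ OrderContPart Y :=
    ocp_mono hx (by rw [abs_of_nonneg (negPart_nonneg x)]; exact negPart_le_abs' x)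
  have e1 := s8P_neg_eq g hp (posPart_nonneg x)
  have e2 := s8P_neg_eq g hn (negPart_nonneg x)
  have e3 : g (x⁺) - g (x⁻) = g x := by rw [← map_sub, posPart_sub_negPart]
  unfold s8Phi
  linarith

/-! ### The core lemma: `P g (h γ)` gets arbitrarily small along a net decreasing to `0`. -/

lemma s8core (g : Y →L[ℝ] ℝ) (E : DirectedType) (h : E.ι → Y)
    (hdec : ∀ γ₁ γ₂, E.r γ₁ γ₂ → h γ₂ ≤ h γ₁) (hglb : IsGLB (Set.range h) 0)
    {ε : ℝ} (hε : 0 < ε) : ∃ γ, s8P g (h γ) < ε := by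
  by_contra hcon
  push_neg at hcon
  have hpos : ∀ γ, (0 : Y) ≤ h γ := fun γ => hglb.1 ⟨γ, rfl⟩
  -- choose witnesses with large value
  have hY : ∀ γ, ∃ y : Y, y ∈ OrderContPart Y ∧ 0 ≤ y ∧ y ≤ h γ ∧ ε / 2 < g y := by
    intro γ
    have h1 : ε / 2 < s8P g (h γ) := lt_of_lt_of_le (by linarith) (hcon γ)
    obtain ⟨r, hr, hr2⟩ := exists_lt_of_lt_csSup (s8Set_img_nonempty g (hpos γ)) h1
    obtain ⟨y, hy, rfl⟩ := hr
    exact ⟨y, hy.1, hy.2.1, hy.2.2, hr2⟩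
  choose yy hya hy0 hyh hgy using hY
  obtain ⟨δ₀⟩ := E.nonempty
  -- the recursive state
  set St : ℕ → E.ι → Y → Y → Prop := fun k δ s t =>
    s ∈ OrderContPart Y ∧ 0 ≤ t ∧ t ≤ s ∧ t ≤ h δ₀ ∧
      ‖s - t‖ ≤ 2 - 2 * (1 / 2 : ℝ) ^ k ∧ (k : ℝ) * (ε / 2) ≤ g s ∧ E.r δ₀ δ with hSt
  have hstep : ∀ k δ s t, St k δ s t → ∃ δ' s' t', St (k + 1) δ' s' t' := by
    rintro k δ s t ⟨hsa, ht0, hts, hth, hnorm, hgs, hδ⟩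
    have hs0 : 0 ≤ s := ht0.trans hts
    -- the net  δ' ↦ s ⊓ h δ'  is order null and dominated by s
    have hnet : NetTendstoZero E fun δ' => ‖s ⊓ h δ'‖ := by
      refine hsa E (fun δ' => s ⊓ h δ') (fun δ' => ?_) ?_
      · rw [abs_of_nonneg (le_inf hs0 (hpos δ')), abs_of_nonneg hs0]
        exact inf_le_left
      · refine ⟨E, h, hdec, hglb, fun γ => ⟨γ, fun i hi => ?_⟩⟩
        rw [sub_zero, abs_of_nonneg (le_inf hs0 (hpos i))]
        exact inf_le_right.trans (hdec γ i hi)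
    obtain ⟨δ₁, hδ₁⟩ := hnet ((1 / 2 : ℝ) ^ k) (by positivity)
    obtain ⟨δ', hd1, hd2⟩ := E.directed δ δ₁
    have hsmall : ‖s ⊓ h δ'‖ < (1 / 2 : ℝ) ^ k := by
      have := hδ₁ δ' hd2
      rwa [abs_of_nonneg (norm_nonneg _)] at this
    set y := yy δ' with hy
    refine ⟨δ', s + y, t ⊔ y, ocp_add hsa (hya δ'), ht0.trans le_sup_left, ?_, ?_, ?_, ?_, ?_⟩
    · exact sup_le (hts.trans (le_add_of_nonneg_right (hy0 δ')))
        (le_add_of_nonneg_left hs0)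
    · refine sup_le hth ((hyh δ').trans (hdec δ₀ δ' ?_))
      exact E.trans _ _ _ hδ hd1
    · have e2 : t ⊓ y + t ⊔ y = t + y := inf_add_sup t y
      have e3 : t ⊔ y = t + y - t ⊓ y := eq_sub_of_add_eq' e2
      have e1 : s + y - t ⊔ y = (s - t) + (t ⊓ y) := by rw [e3]; abel
      have hty0 : (0 : Y) ≤ t ⊓ y := le_inf ht0 (hy0 δ')
      have htyle : t ⊓ y ≤ s ⊓ h δ' := inf_le_inf hts (hyh δ')
      have hn1 : ‖t ⊓ y‖ ≤ ‖s ⊓ h δ'‖ := HasSolidNorm.solid (by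
        rw [abs_of_nonneg hty0, abs_of_nonneg (le_inf hs0 (hpos δ'))]
        exact htyle)
      have hps : (1 / 2 : ℝ) ^ (k + 1) = (1 / 2 : ℝ) ^ k * (1 / 2) := pow_succ _ _
      rw [e1]
      calc ‖(s - t) + (t ⊓ y)‖ ≤ ‖s - t‖ + ‖t ⊓ y‖ := norm_add_le _ _
      _ ≤ 2 - 2 * (1 / 2 : ℝ) ^ (k + 1) := by linarith
    · rw [map_add]
      have := hgy δ'
      push_cast
      linarith
    · exact E.trans _ _ _ hδ hd1
  have hall : ∀ k : ℕ, ∃ δ s t, St k δ s t := by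
    intro k
    induction k with
    | zero =>
      refine ⟨δ₀, 0, 0, ocp_zero, le_rfl, le_rfl, hpos δ₀, ?_, ?_, E.refl δ₀⟩
      · simp
      · simp
    | succ n ih =>
      obtain ⟨δ, s, t, hst⟩ := ih
      exact hstep n δ s t hst
  -- derive the contradiction
  obtain ⟨k, hk⟩ := exists_nat_gt ((‖g‖ * (‖h δ₀‖ + 2)) / (ε / 2))
  obtain ⟨δ, s, t, hsa, ht0, hts, hth, hnorm, hgs, hδ⟩ := hall k
  have hkε : ‖g‖ * (‖h δ₀‖ + 2) < (k : ℝ) * (ε / 2) := by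
    rw [div_lt_iff₀ (by linarith)] at hk
    linarith
  have hnt : ‖t‖ ≤ ‖h δ₀‖ := HasSolidNorm.solid (by
    rw [abs_of_nonneg ht0, abs_of_nonneg (hpos δ₀)]
    exact hth)
  have hns : ‖s‖ ≤ ‖h δ₀‖ + 2 := by
    have e : s = t + (s - t) := by abel
    calc ‖s‖ = ‖t + (s - t)‖ := by rw [← e]
    _ ≤ ‖t‖ + ‖s - t‖ := norm_add_le _ _
    _ ≤ ‖h δ₀‖ + 2 := by
        have h2 : (0 : ℝ) < 2 * (1 / 2 : ℝ) ^ k := by positivity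
        linarith
  have hfinal : g s ≤ ‖g‖ * (‖h δ₀‖ + 2) := by
    calc g s ≤ |g s| := le_abs_self _
    _ = ‖g s‖ := (Real.norm_eq_abs _).symm
    _ ≤ ‖g‖ * ‖s‖ := g.le_opNorm s
    _ ≤ ‖g‖ * (‖h δ₀‖ + 2) := mul_le_mul_of_nonneg_left hns (norm_nonneg g)
  linarith

lemma s8H_ocdual (g : Y →L[ℝ] ℝ) : InOCDual (s8H g) := by
  intro D f hconv ε hε
  obtain ⟨E, h, hdec, hglb, hdom⟩ := hconv
  obtain ⟨γ₁, hγ₁⟩ := s8core g E h hdec hglb (show (0 : ℝ) < ε / 2 by linarith)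
  obtain ⟨γ₂, hγ₂⟩ := s8core (-g) E h hdec hglb (show (0 : ℝ) < ε / 2 by linarith)
  obtain ⟨γ, hga, hgb⟩ := E.directed γ₁ γ₂
  obtain ⟨i₀, hi₀⟩ := hdom γ
  have hpos : ∀ δ, (0 : Y) ≤ h δ := fun δ => hglb.1 ⟨δ, rfl⟩
  refine ⟨i₀, fun i hi => ?_⟩
  have hfi : |f i| ≤ h γ := by have := hi₀ i hi; rwa [sub_zero] at this
  have b1 : |s8Phi g (f i)| ≤ s8P g (h γ₁) :=
    (abs_s8Phi_le g (f i)).trans ((s8P_mono g (abs_nonneg _) hfi).trans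
      (s8P_mono g (hpos γ) (hdec γ₁ γ hga)))
  have b2 : |s8Phi (-g) (f i)| ≤ s8P (-g) (h γ₂) :=
    (abs_s8Phi_le (-g) (f i)).trans ((s8P_mono (-g) (abs_nonneg _) hfi).trans
      (s8P_mono (-g) (hpos γ) (hdec γ₂ γ hgb)))
  show |s8H g (f i)| < ε
  rw [s8H_apply]
  calc |s8Phi g (f i) - s8Phi (-g) (f i)| ≤ |s8Phi g (f i)| + |s8Phi (-g) (f i)| := by
        rw [sub_eq_add_neg]
        exact (abs_add_le _ _).trans (by rw [abs_neg])
  _ < ε := by linarith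

end s8P

end Stmt8Aux

/-- a sequence in the order continuous part `X_a` which is
`σ(X, X_n^~)`-null is weakly null. -/
theorem stmt8 {X : Type*} [NormedAddCommGroup X] [Lattice X] [HasSolidNorm X] [IsOrderedAddMonoid X] [NormedSpace ℝ X] [CompleteSpace X]
    (f : ℕ → X) (hf : ∀ n, f n ∈ OrderContPart X)
    (hnull : ∀ g : X →L[ℝ] ℝ, InOCDual g →
      Filter.Tendsto (fun n => g (f n)) Filter.atTop (nhds 0)) :
    WeaklyNull f := by
  intro g
  have hext := hnull (s8H g) (s8H_ocdual g)
  exact hext.congr (fun n => s8H_eq g (hf n))
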